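/- arXiv:1805.05160 — 4 statements merged into one kernel-verified Lean document; each statement's English description precedes it below -/
import Mathlib

section
/- Let R be a field of characteristic zero and n ≥ 2. Then there exists an invertible diagonal matrix D = diag(d₁,…,d_n) with entries in R* such that the diagonal automorphism ψ_D : X ↦ D X D⁻¹ of UT_n(R) has Reidemeister number R(ψ_D) = 1, i.e. all elements of UT_n(R) are pairwise ψ_D-conjugate. -/
open Matrix

/-- `x` and `y` are twisted conjugate with respect to the automorphism `φ`,
i.e. `x = z * y * (φ z)⁻¹` for some `z`. -/
def TwistedConj {G : Type*} [Group G] (φ : G ≃* G) (x y : G) : Prop :=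
  ∃ z : G, x = z * y * (φ z)⁻¹

/-- The Reidemeister number of an automorphism: the number of twisted conjugacy classes,
as an element of `ℕ∞ = ℕ ∪ {∞}` (`⊤` meaning infinitely many classes). -/
noncomputable def reidemeisterNumber {G : Type*} [Group G] (φ : G ≃* G) : ℕ∞ :=
  Cardinal.toENat (Cardinal.mk (Quot (TwistedConj φ)))

/-- A matrix is (upper) unitriangular if it has `1` on the diagonal and `0` below it. -/
def Matrix.IsUnitriangular {n : ℕ} {R : Type*} [CommRing R]
    (M : Matrix (Fin n) (Fin n) R) : Prop :=
  (∀ i, M i i = 1) ∧ ∀ ⦃i j : Fin n⦄, j < i → M i j = 0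

namespace Matrix.IsUnitriangular

variable {n : ℕ} {R : Type*} [CommRing R] {M N : Matrix (Fin n) (Fin n) R}

theorem blockTriangular (h : M.IsUnitriangular) : M.BlockTriangular (id : Fin n → Fin n) :=
  fun _ _ hij => h.2 hij

theorem one : (1 : Matrix (Fin n) (Fin n) R).IsUnitriangular :=
  ⟨fun i => by simp, fun i j hij => by simp [Matrix.one_apply, (ne_of_lt hij).symm]⟩

theorem diag_mul (hM : M.IsUnitriangular) (hN : N.BlockTriangular (id : Fin n → Fin n))
    (i : Fin n) : (M * N) i i = N i i := by
  rw [Matrix.mul_apply, Finset.sum_eq_single i]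
  · rw [hM.1 i, one_mul]
  · intro k _ hk
    rcases lt_or_gt_of_ne hk with hlt | hgt
    · rw [hM.2 hlt, zero_mul]
    · rw [hN (show (id i : Fin n) < id k from hgt), mul_zero]
  · intro h; exact absurd (Finset.mem_univ i) h

theorem mul (hM : M.IsUnitriangular) (hN : N.IsUnitriangular) : (M * N).IsUnitriangular := by
  constructor
  · intro i
    rw [hM.diag_mul hN.blockTriangular i, hN.1 i]
  · intro i j hij
    rw [Matrix.mul_apply]
    refine Finset.sum_eq_zero fun k _ => ?_
    rcases lt_or_ge k i with hk | hk
    · rw [hM.2 hk, zero_mul]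
    · rw [hN.2 (lt_of_lt_of_le hij hk), mul_zero]

end Matrix.IsUnitriangular

/-- The group `UT n R` of upper unitriangular `n × n` matrices over `R`, realized as a
subgroup of the group of units of the matrix ring. -/
def UT (n : ℕ) (R : Type*) [CommRing R] : Subgroup (Matrix (Fin n) (Fin n) R)ˣ where
  carrier := {u | Matrix.IsUnitriangular (u : Matrix (Fin n) (Fin n) R)}
  one_mem' := by simpa using Matrix.IsUnitriangular.one
  mul_mem' := by
    intro a b ha hb
    simpa using ha.mul hb
  inv_mem' := by
    intro u hu
    have hdet : IsUnit ((u : Matrix (Fin n) (Fin n) R)).det :=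
      (Matrix.isUnit_iff_isUnit_det _).mp u.isUnit
    haveI : Invertible (u : Matrix (Fin n) (Fin n) R) := u.invertible
    have htri : ((u : Matrix (Fin n) (Fin n) R)⁻¹).BlockTriangular (id : Fin n → Fin n) :=
      Matrix.blockTriangular_inv_of_blockTriangular hu.blockTriangular
    have hval : ((u⁻¹ : (Matrix (Fin n) (Fin n) R)ˣ) : Matrix (Fin n) (Fin n) R)
        = (u : Matrix (Fin n) (Fin n) R)⁻¹ := by
      simp [Matrix.coe_units_inv]
    constructor
    · intro i
      have h1 : ((u : Matrix (Fin n) (Fin n) R) * (u : Matrix (Fin n) (Fin n) R)⁻¹) i i = 1 := by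
        rw [Matrix.mul_nonsing_inv _ hdet]; simp
      rw [hval]
      rw [hu.diag_mul htri i] at h1
      exact h1
    · intro i j hij
      rw [hval]
      exact htri hij

/-- The underlying matrix of an element of `UT n R`. -/
def UTmat {n : ℕ} {R : Type*} [CommRing R] (X : UT n R) : Matrix (Fin n) (Fin n) R :=
  ((X : (Matrix (Fin n) (Fin n) R)ˣ) : Matrix (Fin n) (Fin n) R)


section Aux
variable {n : ℕ} {R : Type} [Field R]

noncomputable def solveZ (x c : Matrix (Fin n) (Fin n) R) : Fin n → Fin n → R
  | i, j =>
    if _ : i < j then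
      (1 - c i j)⁻¹ * ∑ k ∈ (Finset.Ioc i j).attach,
        x i (k : Fin n) * c (k : Fin n) j * solveZ x c (k : Fin n) j
    else if i = j then 1 else 0
  termination_by i _ => n - (i : ℕ)
  decreasing_by
    exact Nat.sub_lt_sub_left i.2 (Finset.mem_Ioc.mp k.2).1

lemma solveZ_diag (x c : Matrix (Fin n) (Fin n) R) (i : Fin n) : solveZ x c i i = 1 := by
  rw [solveZ]; simp

lemma solveZ_lower (x c : Matrix (Fin n) (Fin n) R) {i j : Fin n} (h : j < i) :
    solveZ x c i j = 0 := by
  rw [solveZ]; simp [not_lt_of_gt h, (ne_of_gt h)]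

lemma solveZ_key (x c : Matrix (Fin n) (Fin n) R) {i j : Fin n} (h : i < j)
    (hc : c i j ≠ 1) :
    (1 - c i j) * solveZ x c i j = ∑ k ∈ Finset.Ioc i j, x i k * c k j * solveZ x c k j := by
  have h1 : (1 : R) - c i j ≠ 0 := sub_ne_zero.mpr (by simpa using fun h' => hc h'.symm)
  rw [solveZ]
  simp only [dif_pos h]
  rw [← mul_assoc, mul_inv_cancel₀ h1, one_mul]
  exact Finset.sum_attach (Finset.Ioc i j) (fun k => x i k * c k j * solveZ x c k j)

lemma solveZ_spec (x : Matrix (Fin n) (Fin n) R) (hx : x.IsUnitriangular)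
    (c : Matrix (Fin n) (Fin n) R) (hc1 : ∀ i, c i i = 1)
    (hcne : ∀ ⦃i j : Fin n⦄, i < j → c i j ≠ 1) (i j : Fin n) :
    ∑ k, x i k * (c k j * solveZ x c k j) = solveZ x c i j := by
  rcases lt_trichotomy i j with h | h | h
  · have hsplit : ∑ k, x i k * (c k j * solveZ x c k j)
        = ∑ k ∈ Finset.Icc i j, x i k * (c k j * solveZ x c k j) := by
      refine (Finset.sum_subset (Finset.subset_univ _) ?_).symm
      intro k _ hk
      rw [Finset.mem_Icc, not_and_or] at hk
      rcases hk with hk | hk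
      · rw [hx.2 (lt_of_not_ge hk), zero_mul]
      · rw [solveZ_lower x c (lt_of_not_ge hk), mul_zero, mul_zero]
    rw [hsplit, Finset.Icc_eq_cons_Ioc h.le, Finset.sum_cons, hx.1 i, one_mul]
    have hkey := solveZ_key x c h (hcne h)
    have heq : ∑ k ∈ Finset.Ioc i j, x i k * (c k j * solveZ x c k j)
        = (1 - c i j) * solveZ x c i j := by
      rw [hkey]; exact Finset.sum_congr rfl fun k _ => by ring
    rw [heq]; ring
  · subst h
    rw [Finset.sum_eq_single i]
    · rw [hx.1 i, hc1 i, solveZ_diag]; ring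
    · intro k _ hk
      rcases lt_or_gt_of_ne hk with hlt | hgt
      · rw [hx.2 hlt, zero_mul]
      · rw [solveZ_lower x c hgt, mul_zero, mul_zero]
    · intro h; exact absurd (Finset.mem_univ i) h
  · rw [solveZ_lower x c h]
    refine Finset.sum_eq_zero fun k _ => ?_
    rcases lt_or_ge k i with hk | hk
    · rw [hx.2 hk, zero_mul]
    · rw [solveZ_lower x c (lt_of_lt_of_le h hk), mul_zero, mul_zero]

lemma conj_diag_unitriangular (e : Fin n → Rˣ) {M : Matrix (Fin n) (Fin n) R}
    (hM : M.IsUnitriangular) :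
    (Matrix.diagonal (fun i => (e i : R)) * M *
      Matrix.diagonal (fun i => (((e i)⁻¹ : Rˣ) : R))).IsUnitriangular := by
  constructor
  · intro i
    rw [Matrix.mul_diagonal, Matrix.diagonal_mul, hM.1 i]
    simp
  · intro i j hij
    rw [Matrix.mul_diagonal, Matrix.diagonal_mul, hM.2 hij]
    ring

/-- The diagonal matrix with unit entries, as a unit of the matrix ring. -/
noncomputable def diagU (e : Fin n → Rˣ) : (Matrix (Fin n) (Fin n) R)ˣ where
  val := Matrix.diagonal (fun i => (e i : R))
  inv := Matrix.diagonal (fun i => (((e i)⁻¹ : Rˣ) : R))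
  val_inv := by rw [Matrix.diagonal_mul_diagonal]; simp
  inv_val := by rw [Matrix.diagonal_mul_diagonal]; simp

lemma diagU_inv_val (e : Fin n → Rˣ) :
    (((diagU e)⁻¹ : (Matrix (Fin n) (Fin n) R)ˣ) : Matrix (Fin n) (Fin n) R)
      = Matrix.diagonal (fun i => (((e i)⁻¹ : Rˣ) : R)) := rfl

lemma diagU_conj_mem (e : Fin n → Rˣ) (X : (Matrix (Fin n) (Fin n) R)ˣ) (hX : X ∈ UT n R) :
    diagU e * X * (diagU e)⁻¹ ∈ UT n R := by
  show Matrix.IsUnitriangular _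
  rw [Units.val_mul, Units.val_mul, diagU_inv_val]
  exact conj_diag_unitriangular e hX

/-- The diagonal automorphism of `UT n R`. -/
noncomputable def diagAut (e : Fin n → Rˣ) : UT n R ≃* UT n R where
  toFun X := ⟨diagU e * X * (diagU e)⁻¹, diagU_conj_mem e X X.2⟩
  invFun X := ⟨(diagU e)⁻¹ * X * diagU e, by
    have := diagU_conj_mem (fun i => (e i)⁻¹) X X.2
    have hinv : diagU (fun i => (e i)⁻¹) = (diagU e)⁻¹ := by
      apply Units.ext
      simp [diagU, diagU_inv_val]
    rwa [hinv, inv_inv] at this⟩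
  left_inv X := by ext : 1; push_cast; group
  right_inv X := by ext : 1; push_cast; group
  map_mul' a b := by ext : 1; push_cast; group

end Aux
/-- Over a field of characteristic zero, for `n ≥ 2` there is a diagonal automorphism
`X ↦ D X D⁻¹` of `UT n R` with Reidemeister number `1`. -/
theorem exists_diagonal_aut_reidemeisterNumber_eq_one
    (R : Type) [Field R] [CharZero R] (n : ℕ) (hn : 2 ≤ n) :
    ∃ (d : Fin n → Rˣ) (ψ : MulAut (UT n R)),
      (∀ X : UT n R, UTmat (ψ X) =
        Matrix.diagonal (fun i => (d i : R)) * UTmat X *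
          Matrix.diagonal (fun i => (((d i)⁻¹ : Rˣ) : R))) ∧
      reidemeisterNumber (ψ : (UT n R) ≃* (UT n R)) = 1 := by
  have h2 : (2 : R) ≠ 0 := two_ne_zero
  set u : Rˣ := Units.mk0 2 h2 with hu
  set d : Fin n → Rˣ := fun i => u ^ (i : ℕ) with hd
  -- powers of 2 are injective
  have hpow : ∀ a b : ℕ, a < b → (2 : R) ^ a ≠ (2 : R) ^ b := by
    intro a b hab h
    have hb : b = a + (b - a) := by omega
    rw [hb, pow_add] at h
    have h1 : (2 : R) ^ (b - a) = 1 := by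
      have h' : (2 : R) ^ a * 1 = (2 : R) ^ a * (2 : R) ^ (b - a) := by
        rw [mul_one]; exact h
      exact (mul_left_cancel₀ (pow_ne_zero a h2) h').symm
    have hcast : (((2 : ℕ) ^ (b - a) : ℕ) : R) = ((1 : ℕ) : R) := by push_cast; exact h1
    have := Nat.cast_injective hcast
    have hba : b - a ≠ 0 := by omega
    have : 2 ^ (b - a) ≥ 2 ^ 1 := Nat.pow_le_pow_right (by norm_num) (by omega)
    omega
  have hdne : ∀ ⦃i j : Fin n⦄, i < j → (d i : R) * (((d j)⁻¹ : Rˣ) : R) ≠ 1 := by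
    intro i j hij h
    have hj : ((d j : Rˣ) : R) ≠ 0 := (d j).ne_zero
    have : (d i : R) = (d j : R) := by
      have := congrArg (· * ((d j : Rˣ) : R)) h
      simpa [mul_assoc, Units.inv_mul_eq_iff_eq_mul] using this
    exact hpow i j hij (by simpa [hd, hu] using this)
  refine ⟨d, diagAut d, ?_, ?_⟩
  · intro X
    rfl
  · -- every element is twisted conjugate to 1
    have key : ∀ X : UT n R, TwistedConj (diagAut d : UT n R ≃* UT n R) X 1 := by
      intro X
      have hx : (UTmat X).IsUnitriangular := X.2
      set xm := UTmat X with hxm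
      set c : Matrix (Fin n) (Fin n) R :=
        Matrix.of (fun i j => (d i : R) * (((d j)⁻¹ : Rˣ) : R)) with hc
      have hc1 : ∀ i, c i i = 1 := by
        intro i
        show (d i : R) * (((d i)⁻¹ : Rˣ) : R) = 1
        rw [← Units.val_mul, mul_inv_cancel, Units.val_one]
      have hcne : ∀ ⦃i j : Fin n⦄, i < j → c i j ≠ 1 := fun i j hij => hdne hij
      set zm : Matrix (Fin n) (Fin n) R := Matrix.of (solveZ xm c) with hzm
      have hztri : zm.IsUnitriangular :=
        ⟨fun i => solveZ_diag xm c i, fun i j hij => solveZ_lower xm c hij⟩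
      have hzdet : IsUnit zm.det := by
        rw [Matrix.det_of_upperTriangular hztri.blockTriangular]
        simp [hztri.1]
      obtain ⟨zu, hzu⟩ := (Matrix.isUnit_iff_isUnit_det _).mpr hzdet
      have hmemz : zu ∈ UT n R := by
        show Matrix.IsUnitriangular _
        rw [hzu]; exact hztri
      -- the matrix equation
      have hmat : xm * (Matrix.diagonal (fun i => (d i : R)) * zm *
          Matrix.diagonal (fun i => (((d i)⁻¹ : Rˣ) : R))) = zm := by
        ext i j
        rw [Matrix.mul_apply]
        have := solveZ_spec xm hx c hc1 hcne i j
        calc ∑ k, xm i k * (Matrix.diagonal (fun i => (d i : R)) * zm *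
              Matrix.diagonal (fun i => (((d i)⁻¹ : Rˣ) : R))) k j
            = ∑ k, xm i k * (c k j * solveZ xm c k j) := by
              refine Finset.sum_congr rfl fun k _ => ?_
              rw [Matrix.mul_diagonal, Matrix.diagonal_mul]
              simp only [hzm, hc, Matrix.of_apply]
              ring
          _ = solveZ xm c i j := this
      -- the unit equation
      have hu2 : (X : (Matrix (Fin n) (Fin n) R)ˣ) * (diagU d * zu * (diagU d)⁻¹) = zu := by
        apply Units.ext
        rw [Units.val_mul, Units.val_mul, Units.val_mul, diagU_inv_val, hzu]
        exact hmat
      refine ⟨⟨zu, hmemz⟩, ?_⟩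
      apply Subtype.ext
      show (X : (Matrix (Fin n) (Fin n) R)ˣ) = zu * 1 * (diagU d * zu * (diagU d)⁻¹)⁻¹
      rw [mul_one]
      exact eq_mul_inv_of_mul_eq hu2
    have hq : ∀ a b : Quot (TwistedConj (diagAut d : UT n R ≃* UT n R)), a = b := by
      have hone : ∀ X : UT n R, Quot.mk _ X
          = Quot.mk (TwistedConj (diagAut d : UT n R ≃* UT n R)) (1 : UT n R) :=
        fun X => Quot.sound (key X)
      intro a b
      induction a using Quot.ind with | _ x =>
      induction b using Quot.ind with | _ y =>
      rw [hone x, hone y]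
    haveI : Subsingleton (Quot (TwistedConj (diagAut d : UT n R ≃* UT n R))) := ⟨hq⟩
    haveI : Nonempty (Quot (TwistedConj (diagAut d : UT n R ≃* UT n R))) :=
      ⟨Quot.mk _ 1⟩
    show Cardinal.toENat (Cardinal.mk _) = 1
    rw [Cardinal.mk_eq_one]
    simp
end

section
/- Let G be a nilpotent group of class n with upper central series 1 = Z₀ < Z₁ < … < Z_n = G, let φ be an automorphism of G, and for each k let φ_k denote the automorphism of Z_{k+1}/Z_k induced by φ. Then R(φ) ≤ ∏_{k=0}^{n−1} R(φ_k), where the product is taken in ℕ ∪ {∞}. -/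
open Matrix

/-- Twisted conjugacy is an equivalence relation. -/
lemma twistedConj_equivalence {H : Type*} [Group H] (χ : H ≃* H) :
    Equivalence (TwistedConj χ) := by
  constructor
  · intro x; exact ⟨1, by simp⟩
  · rintro x y ⟨z, h⟩
    exact ⟨z⁻¹, by rw [h]; simp only [map_inv]; group⟩
  · rintro x y t ⟨z, hz⟩ ⟨w, hw⟩
    exact ⟨z * w, by rw [hz, hw]; simp only [_root_.map_mul]; group⟩

/-- Twisted conjugacy modulo a normal subgroup is an equivalence relation. -/
lemma twistedConjMod_equivalence {G : Type*} [Group G] (φ : G ≃* G) (N : Subgroup G)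
    [hN : N.Normal] :
    Equivalence (fun x y : G => ∃ z : G, (z * y * (φ z)⁻¹)⁻¹ * x ∈ N) := by
  constructor
  · intro x
    exact ⟨1, by simpa using one_mem N⟩
  · rintro x y ⟨z, h⟩
    refine ⟨z⁻¹, ?_⟩
    have key : (z⁻¹ * x * (φ z⁻¹)⁻¹)⁻¹ * y
        = (φ z)⁻¹ * ((z * y * (φ z)⁻¹)⁻¹ * x)⁻¹ * ((φ z)⁻¹)⁻¹ := by
      simp only [map_inv]; group
    rw [key]
    exact hN.conj_mem _ (inv_mem h) _
  · rintro x y t ⟨z, hz⟩ ⟨w, hw⟩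
    refine ⟨z * w, ?_⟩
    have key : (z * w * t * (φ (z * w))⁻¹)⁻¹ * x
        = (φ z * ((w * t * (φ w)⁻¹)⁻¹ * y) * (φ z)⁻¹) * ((z * y * (φ z)⁻¹)⁻¹ * x) := by
      simp only [_root_.map_mul]; group
    rw [key]
    exact mul_mem (hN.conj_mem _ hw _) hz

lemma twistedConj_keyA {G : Type*} [Group G] (φ : G ≃* G) (k : ℕ) (x y z d : G)
    (hd : d ∈ Subgroup.upperCentralSeries G (k + 1)) (hx : x = z * y * (φ z)⁻¹ * d) :
    ∃ w : G, (w * (y * d) * (φ w)⁻¹)⁻¹ * x ∈ Subgroup.upperCentralSeries G k := by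
  refine ⟨z, ?_⟩
  have h1 : d⁻¹ * (φ z) * (d⁻¹)⁻¹ * (φ z)⁻¹ ∈ Subgroup.upperCentralSeries G k :=
    mem_upperCentralSeries_succ_iff.mp (inv_mem hd) (φ z)
  have key : (z * (y * d) * (φ z)⁻¹)⁻¹ * x
      = (d⁻¹ * (φ z) * (d⁻¹)⁻¹ * (φ z)⁻¹)⁻¹ := by
    rw [hx]; group
  rw [key]
  exact inv_mem h1

lemma twistedConj_keyB {G : Type*} [Group G] (φ : G ≃* G) (k : ℕ) (e d d' y : G)
    (he : e ∈ Subgroup.upperCentralSeries G (k + 1))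
    (h : (e * d * (φ e)⁻¹)⁻¹ * d' ∈ Subgroup.upperCentralSeries G k) :
    ∃ w : G, (w * (y * d) * (φ w)⁻¹)⁻¹ * (y * d') ∈ Subgroup.upperCentralSeries G k := by
  have hNk : (Subgroup.upperCentralSeries G k).Normal := inferInstance
  refine ⟨e, ?_⟩
  have h1 : e⁻¹ * y * (e⁻¹)⁻¹ * y⁻¹ ∈ Subgroup.upperCentralSeries G k :=
    mem_upperCentralSeries_succ_iff.mp (inv_mem he) y
  have hc1 : y⁻¹ * e⁻¹ * y * e ∈ Subgroup.upperCentralSeries G k := by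
    have h2 := hNk.conj_mem _ h1 y⁻¹
    have heq : y⁻¹ * e⁻¹ * y * e = y⁻¹ * (e⁻¹ * y * (e⁻¹)⁻¹ * y⁻¹) * (y⁻¹)⁻¹ := by group
    exact heq ▸ h2
  have key : (e * (y * d) * (φ e)⁻¹)⁻¹ * (y * d')
      = ((φ e * d⁻¹) * (y⁻¹ * e⁻¹ * y * e) * (φ e * d⁻¹)⁻¹) * ((e * d * (φ e)⁻¹)⁻¹ * d') := by
    group
  rw [key]
  exact mul_mem (hNk.conj_mem _ hc1 _) h

/-- The step surjection: twisted conjugacy classes modulo `Z_k` are covered by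
classes modulo `Z_{k+1}` together with classes of the induced automorphism of
`Z_{k+1}/Z_k`. -/
lemma twistedConj_step_surjective {G : Type*} [Group G] (φ : G ≃* G) (k : ℕ)
    (hφ1 : ∀ x : G, x ∈ Subgroup.upperCentralSeries G (k + 1) → φ x ∈ Subgroup.upperCentralSeries G (k + 1))
    (ψk : (Subgroup.upperCentralSeries G (k + 1) ⧸
          (Subgroup.upperCentralSeries G k).subgroupOf (Subgroup.upperCentralSeries G (k + 1))) ≃*
        (Subgroup.upperCentralSeries G (k + 1) ⧸
          (Subgroup.upperCentralSeries G k).subgroupOf (Subgroup.upperCentralSeries G (k + 1))))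
    (hψk : ∀ (x : G) (hx : x ∈ Subgroup.upperCentralSeries G (k + 1)),
      ψk (QuotientGroup.mk ⟨x, hx⟩) = QuotientGroup.mk ⟨φ x, hφ1 x hx⟩) :
    ∃ f : Quot (fun x y : G => ∃ z : G, (z * y * (φ z)⁻¹)⁻¹ * x ∈ Subgroup.upperCentralSeries G (k + 1))
            × Quot (TwistedConj ψk) →
          Quot (fun x y : G => ∃ z : G, (z * y * (φ z)⁻¹)⁻¹ * x ∈ Subgroup.upperCentralSeries G k),
      Function.Surjective f := by
  classical
  set Ek1 : G → G → Prop :=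
    fun x y => ∃ z : G, (z * y * (φ z)⁻¹)⁻¹ * x ∈ Subgroup.upperCentralSeries G (k + 1) with hEk1
  set Ek : G → G → Prop :=
    fun x y => ∃ z : G, (z * y * (φ z)⁻¹)⁻¹ * x ∈ Subgroup.upperCentralSeries G k with hEk
  refine ⟨fun p => Quot.mk Ek ((p.1.out : G) *
    ((p.2.out.out : ↥(Subgroup.upperCentralSeries G (k+1))) : G)), ?_⟩
  intro p
  set x : G := p.out with hxdef
  set q : Quot Ek1 := Quot.mk Ek1 x with hq
  have hrel : Ek1 x q.out := by
    have h := Quot.out_eq q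
    have h2 : Relation.EqvGen Ek1 q.out x := Quot.eq.mp h
    exact (twistedConjMod_equivalence φ (Subgroup.upperCentralSeries G (k+1))).symm
      ((twistedConjMod_equivalence φ (Subgroup.upperCentralSeries G (k+1))).eqvGen_iff.mp h2)
  obtain ⟨z, hd⟩ := hrel
  set y : G := q.out with hy
  set d : G := (z * y * (φ z)⁻¹)⁻¹ * x with hdd
  set c : Quot (TwistedConj ψk) := Quot.mk _ (QuotientGroup.mk ⟨d, hd⟩) with hc
  refine ⟨(q, c), ?_⟩
  set D1 : ↥(Subgroup.upperCentralSeries G (k+1)) := c.out.out with hD1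
  have hout : QuotientGroup.mk (s := (Subgroup.upperCentralSeries G k).subgroupOf
      (Subgroup.upperCentralSeries G (k+1))) D1 = c.out := QuotientGroup.out_eq' c.out
  have htc : TwistedConj ψk (QuotientGroup.mk D1) (QuotientGroup.mk ⟨d, hd⟩) := by
    have h := Quot.out_eq c
    have h2 : Relation.EqvGen (TwistedConj ψk) c.out (QuotientGroup.mk ⟨d, hd⟩) := Quot.eq.mp h
    have h3 := (twistedConj_equivalence ψk).eqvGen_iff.mp h2
    rwa [hout]
  obtain ⟨qe, hqe⟩ := htc
  obtain ⟨E, hE⟩ := QuotientGroup.mk_surjective qe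
  have hpsi : ψk qe = QuotientGroup.mk ⟨φ (E : G), hφ1 _ E.2⟩ := by
    rw [← hE]; exact hψk E.1 E.2
  rw [hpsi, ← hE] at hqe
  have hqe2 : QuotientGroup.mk (s := (Subgroup.upperCentralSeries G k).subgroupOf
      (Subgroup.upperCentralSeries G (k+1)))
      (E * ⟨d, hd⟩ * (⟨φ (E : G), hφ1 _ E.2⟩ : ↥(Subgroup.upperCentralSeries G (k+1)))⁻¹)
      = QuotientGroup.mk D1 := by
    simp only [QuotientGroup.mk_mul, QuotientGroup.mk_inv]
    exact hqe.symm
  have hmem : ((E : G) * d * (φ (E : G))⁻¹)⁻¹ * (D1 : G) ∈ Subgroup.upperCentralSeries G k := by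
    have h5 := QuotientGroup.eq.mp hqe2
    rw [Subgroup.mem_subgroupOf] at h5
    simpa using h5
  have hB := twistedConj_keyB φ k (E : G) d (D1 : G) y E.2 hmem
  have hA := twistedConj_keyA φ k x y z d hd (by rw [hdd]; group)
  have hEkrel : Ek x (y * (D1 : G)) := by
    have e1 : Ek (y * (D1 : G)) (y * d) := hB
    have e2 : Ek x (y * d) := hA
    exact (twistedConjMod_equivalence φ (Subgroup.upperCentralSeries G k)).trans e2
      ((twistedConjMod_equivalence φ (Subgroup.upperCentralSeries G k)).symm e1)
  show Quot.mk Ek (q.out * ((c.out.out : ↥(Subgroup.upperCentralSeries G (k+1))) : G)) = p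
  calc Quot.mk Ek (q.out * ((c.out.out : ↥(Subgroup.upperCentralSeries G (k+1))) : G))
      = Quot.mk Ek x := (Quot.sound hEkrel).symm
    _ = p := Quot.out_eq p

/-- If `G` is nilpotent of class `n` with upper central series
`1 = Z₀ < Z₁ < … < Z_n = G` and `φ_k` denotes the automorphism of `Z_{k+1}/Z_k` induced
by an automorphism `φ`, then `R(φ) ≤ ∏_{k=0}^{n-1} R(φ_k)`. -/
theorem reidemeisterNumber_le_prod_upperCentralSeries
    {G : Type*} [Group G] (n : ℕ)
    (htop : Subgroup.upperCentralSeries G n = ⊤)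
    (hstrict : ∀ k < n, Subgroup.upperCentralSeries G k < Subgroup.upperCentralSeries G (k + 1))
    (φ : G ≃* G)
    (hφ : ∀ (k : ℕ) (x : G), x ∈ Subgroup.upperCentralSeries G k → φ x ∈ Subgroup.upperCentralSeries G k)
    (ψ : ∀ k : ℕ,
      (Subgroup.upperCentralSeries G (k + 1) ⧸
          (Subgroup.upperCentralSeries G k).subgroupOf (Subgroup.upperCentralSeries G (k + 1))) ≃*
      (Subgroup.upperCentralSeries G (k + 1) ⧸
          (Subgroup.upperCentralSeries G k).subgroupOf (Subgroup.upperCentralSeries G (k + 1))))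
    (hψ : ∀ (k : ℕ) (x : G) (hx : x ∈ Subgroup.upperCentralSeries G (k + 1)),
      ψ k (QuotientGroup.mk ⟨x, hx⟩) = QuotientGroup.mk ⟨φ x, hφ (k + 1) x hx⟩) :
    reidemeisterNumber φ ≤ ∏ k ∈ Finset.range n, reidemeisterNumber (ψ k) := by
  classical
  set E : ℕ → G → G → Prop :=
    fun k x y => ∃ z : G, (z * y * (φ z)⁻¹)⁻¹ * x ∈ Subgroup.upperCentralSeries G k with hE
  set RN : ℕ → ℕ∞ := fun k => Cardinal.toENat (Cardinal.mk (Quot (E k))) with hRN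
  -- the one-step inequality
  have hstep : ∀ k, RN k ≤ RN (k + 1) * reidemeisterNumber (ψ k) := by
    intro k
    obtain ⟨f, hf⟩ := twistedConj_step_surjective φ k (fun x hx => hφ (k + 1) x hx) (ψ k)
      (fun x hx => hψ k x hx)
    have h1 : Cardinal.mk (Quot (E k))
        ≤ Cardinal.mk (Quot (E (k + 1)) × Quot (TwistedConj (ψ k))) :=
      Cardinal.mk_le_of_surjective hf
    have h2 : Cardinal.mk (Quot (E (k + 1)) × Quot (TwistedConj (ψ k)))
        = Cardinal.mk (Quot (E (k + 1))) * Cardinal.mk (Quot (TwistedConj (ψ k))) := by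
      simp [Cardinal.mk_prod]
    calc RN k ≤ Cardinal.toENat (Cardinal.mk (Quot (E (k + 1)) × Quot (TwistedConj (ψ k)))) :=
          Cardinal.toENat.monotone' h1
      _ = RN (k + 1) * reidemeisterNumber (ψ k) := by
          rw [h2, _root_.map_mul]; rfl
  -- the inductive bound
  have hmain : ∀ m : ℕ, RN 0 ≤ RN m * ∏ k ∈ Finset.range m, reidemeisterNumber (ψ k) := by
    intro m
    induction m with
    | zero => simp
    | succ m ih =>
        calc RN 0 ≤ RN m * ∏ k ∈ Finset.range m, reidemeisterNumber (ψ k) := ih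
          _ ≤ (RN (m + 1) * reidemeisterNumber (ψ m))
              * ∏ k ∈ Finset.range m, reidemeisterNumber (ψ k) :=
            mul_le_mul_left (hstep m) _
          _ = RN (m + 1) * ∏ k ∈ Finset.range (m + 1), reidemeisterNumber (ψ k) := by
            rw [Finset.prod_range_succ, mul_assoc, mul_comm (reidemeisterNumber (ψ m))]
  -- the top class is a single class
  have hRNn : RN n = 1 := by
    have hsub : Subsingleton (Quot (E n)) := by
      constructor
      intro a b
      induction a using Quot.ind with | _ a =>
      induction b using Quot.ind with | _ b =>
      exact Quot.sound ⟨1, by rw [htop]; exact Subgroup.mem_top _⟩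
    have h1 : Cardinal.mk (Quot (E n)) = 1 :=
      Cardinal.eq_one_iff_unique.mpr ⟨hsub, ⟨Quot.mk _ 1⟩⟩
    rw [hRN]
    simp [h1]
  -- the bottom relation is twisted conjugacy
  have hE0 : TwistedConj φ = E 0 := by
    funext x y
    apply propext
    constructor
    · rintro ⟨z, h⟩
      refine ⟨z, ?_⟩
      rw [upperCentralSeries_zero, Subgroup.mem_bot, h]
      group
    · rintro ⟨z, h⟩
      rw [upperCentralSeries_zero, Subgroup.mem_bot] at h
      exact ⟨z, by rwa [inv_mul_eq_one, eq_comm] at h⟩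
  have hfin : reidemeisterNumber φ = RN 0 := by
    rw [hRN, reidemeisterNumber, hE0]
  calc reidemeisterNumber φ = RN 0 := hfin
    _ ≤ RN n * ∏ k ∈ Finset.range n, reidemeisterNumber (ψ k) := hmain n
    _ = ∏ k ∈ Finset.range n, reidemeisterNumber (ψ k) := by rw [hRNn, one_mul]
end

section
/- Let R be an infinite integral domain whose additive group R⁺ is a finitely generated abelian group, let a ∈ R* be a unit with a ≠ 1, and let φ : R⁺ → R⁺ be the automorphism x ↦ a·x. Then the Reidemeister number R(φ) is finite. -/
open Matrix

/-- `x` and `y` are twisted conjugate with respect to the additive automorphism `φ`,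
i.e. `x = z + y - φ z` for some `z`. -/
def AddTwistedConj {G : Type*} [AddGroup G] (φ : G ≃+ G) (x y : G) : Prop :=
  ∃ z : G, x = z + y - φ z

/-- The Reidemeister number of an automorphism of an additive group: the number of twisted
conjugacy classes, as an element of `ℕ∞ = ℕ ∪ {∞}`. -/
noncomputable def addReidemeisterNumber {G : Type*} [AddGroup G] (φ : G ≃+ G) : ℕ∞ :=
  Cardinal.toENat (Cardinal.mk (Quot (AddTwistedConj φ)))

/-- An infinite integral domain whose additive group is finitely generated has
characteristic zero. -/
theorem charZero_of_addGroupFG (R : Type) [CommRing R] [IsDomain R] [Infinite R]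
    [AddGroup.FG R] : CharZero R := by
  have hfin : Module.Finite ℤ R := Module.Finite.iff_addGroup_fg.mpr ‹_›
  by_contra h
  obtain ⟨p, hp⟩ := CharP.exists R
  have hp0 : p ≠ 0 := by
    rintro rfl
    exact h (CharP.charP_to_charZero R)
  haveI : NeZero p := ⟨hp0⟩
  haveI : Algebra (ZMod p) R := ZMod.algebra R p
  haveI : Module.Finite (ZMod p) R := Module.Finite.of_restrictScalars_finite ℤ (ZMod p) R
  have : Finite R := Module.finite_of_finite (ZMod p)
  exact not_finite R

/-- Let `R` be an infinite integral domain whose additive group is finitely generated, and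
let `a ≠ 1` be a unit of `R`. Then the automorphism `x ↦ a * x` of the additive group of `R`
has finite Reidemeister number. -/
theorem addReidemeisterNumber_mul_unit_ne_top
    (R : Type) [CommRing R] [IsDomain R] [Infinite R] [AddGroup.FG R]
    (a : Rˣ) (ha : (a : R) ≠ 1) (φ : R ≃+ R) (hφ : ∀ x : R, φ x = (a : R) * x) :
    addReidemeisterNumber φ ≠ ⊤ := by
  -- The quotient `R ⧸ (1 - a)` is finite.
  haveI := charZero_of_addGroupFG R
  haveI : Module.Finite ℤ R := Module.Finite.iff_addGroup_fg.mpr ‹_›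
  haveI : Module.Free ℤ R := Module.free_of_finite_type_torsion_free'
  set I : Ideal R := Ideal.span {(1 : R) - a} with hI
  have hne : I ≠ ⊥ := by
    simp only [hI, Ne, Ideal.span_singleton_eq_bot, sub_eq_zero]
    exact fun h => ha h.symm
  haveI : Finite (R ⧸ I) := Ideal.finiteQuotientOfFreeOfNeBot _ hne
  -- Twisted conjugacy is congruence mod `I`.
  have key : ∀ x y : R, AddTwistedConj φ x y ↔ x - y ∈ I := by
    intro x y
    constructor
    · rintro ⟨z, rfl⟩
      rw [hφ]
      refine Ideal.mem_span_singleton'.mpr ⟨z, ?_⟩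
      ring
    · intro hxy
      obtain ⟨c, hc⟩ := Ideal.mem_span_singleton'.mp hxy
      refine ⟨c, ?_⟩
      rw [hφ]
      have : x - y = c - a * c := by rw [← hc]; ring
      linear_combination this
  -- Inject the set of classes into `R ⧸ I`.
  have hinj : Function.Injective
      (Quot.lift (Ideal.Quotient.mk I)
        (fun x y h => Ideal.Quotient.eq.mpr ((key x y).mp h)) :
        Quot (AddTwistedConj φ) → R ⧸ I) := by
    intro u v
    induction u using Quot.ind with | _ x =>
    induction v using Quot.ind with | _ y =>
    intro h
    exact Quot.sound ((key x y).mpr (Ideal.Quotient.eq.mp h))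
  have : Finite (Quot (AddTwistedConj φ)) := Finite.of_injective _ hinj
  rw [addReidemeisterNumber, Ne, Cardinal.toENat_eq_top, not_le]
  exact Cardinal.lt_aleph0_of_finite _
end

section
/- Let p be a positive integer which is not a perfect square. Then for every n ≥ 2 the group UT_n(ℤ[√p]) of upper unitriangular n×n matrices over the ring ℤ[√p] does not possess the R_∞-property, i.e. it admits an automorphism with finite Reidemeister number. -/
open Matrix

-- Part 1: ring-level lemmas about Zsqrtd

lemma nonsquare_int {p : ℕ} (hsq : ¬ IsSquare p) : ∀ m : ℤ, (p:ℤ) ≠ m * m := by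
  intro m hm
  refine hsq ⟨m.natAbs, ?_⟩
  have h2 : ((m.natAbs * m.natAbs : ℕ) : ℤ) = (p : ℤ) := by
    rw [Int.natAbs_mul_self]; exact hm.symm
  exact_mod_cast h2.symm

lemma exists_unit {p : ℕ} (hp : 0 < p) (hsq : ¬ IsSquare p) :
    ∃ ε : (Zsqrtd (p:ℤ))ˣ, ∀ k : ℕ, k ≠ 0 → ((ε : Zsqrtd (p:ℤ)))^k ≠ 1 := by
  have hd : (0:ℤ) < (p:ℤ) := by exact_mod_cast hp
  have hds : ¬ IsSquare ((p:ℕ):ℤ) := by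
    intro ⟨m, hm⟩
    exact nonsquare_int hsq m hm
  obtain ⟨x, y, hxy, hy⟩ := Pell.exists_of_not_isSquare hd hds
  set a : ℤ := |x| with ha
  set b : ℤ := |y| with hb
  have hab : a^2 - (p:ℤ) * b^2 = 1 := by rw [ha, hb, sq_abs, sq_abs]; exact hxy
  have hb1 : 1 ≤ b := by
    rcases lt_or_ge 0 b with h | h
    · omega
    · have : b = 0 ∨ b < 0 := by omega
      rcases this with h0 | h0
      · exact absurd (abs_eq_zero.mp h0) hy
      · exact absurd (abs_nonneg y) (not_le.mpr h0)
  have ha1 : 1 ≤ a := by nlinarith [abs_nonneg x, sq_nonneg b]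
  refine ⟨⟨⟨a, b⟩, ⟨a, -b⟩, ?_, ?_⟩, ?_⟩
  · refine Zsqrtd.ext ?_ ?_
    · simp [Zsqrtd.re_mul]
      linear_combination hab
    · simp [Zsqrtd.im_mul]
      ring
  · refine Zsqrtd.ext ?_ ?_
    · simp [Zsqrtd.re_mul]
      linear_combination hab
    · simp [Zsqrtd.im_mul]
      ring
  · intro k hk hpow
    have hroot : (Real.sqrt p) * (Real.sqrt p) = (((p:ℤ) : ℤ) : ℝ) := by
      rw [Real.mul_self_sqrt (by positivity)]
      push_cast; ring
    set f : Zsqrtd (p:ℤ) →+* ℝ := Zsqrtd.lift ⟨Real.sqrt p, hroot⟩ with hf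
    have hfu : f ⟨a, b⟩ = (a:ℝ) + (b:ℝ) * Real.sqrt p := by
      simp [hf, Zsqrtd.lift]
    have hsp : (1:ℝ) ≤ Real.sqrt p := by
      rw [show (1:ℝ) = Real.sqrt 1 by simp]
      exact Real.sqrt_le_sqrt (by exact_mod_cast hp)
    have h1 : (1:ℝ) < f ⟨a, b⟩ := by
      rw [hfu]
      have hb' : (1:ℝ) ≤ (b:ℝ) := by exact_mod_cast hb1
      have ha' : (1:ℝ) ≤ (a:ℝ) := by exact_mod_cast ha1
      nlinarith
    have := congrArg f hpow
    rw [map_pow, _root_.map_one] at this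
    have : (1:ℝ) < 1 := by
      calc (1:ℝ) < (f ⟨a,b⟩)^k := one_lt_pow₀ h1 hk
      _ = 1 := this
    exact lt_irrefl _ this

lemma exists_modulus {p : ℕ} (hns : ∀ m : ℤ, (p:ℤ) ≠ m * m)
    (ε : (Zsqrtd (p:ℤ))ˣ) (hε : ∀ k : ℕ, k ≠ 0 → ((ε : Zsqrtd (p:ℤ)))^k ≠ 1) (n : ℕ) :
    ∃ M : ℤ, 0 < M ∧ ∀ ℓ : ℕ, ℓ ≠ 0 → ℓ ≤ n →
      (1 - ((ε : Zsqrtd (p:ℤ)))^ℓ) ∣ ((M : ℤ) : Zsqrtd (p:ℤ)) := by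
  set c : ℕ → Zsqrtd (p:ℤ) := fun ℓ => 1 - ((ε : Zsqrtd (p:ℤ)))^ℓ with hc
  have hcne : ∀ ℓ : ℕ, ℓ ≠ 0 → c ℓ ≠ 0 := fun ℓ hℓ =>
    sub_ne_zero.mpr (Ne.symm (hε ℓ hℓ))
  refine ⟨∏ k ∈ Finset.range n, (Zsqrtd.norm (c (k+1)))^2, ?_, ?_⟩
  · refine Finset.prod_pos fun k _ => ?_
    have : Zsqrtd.norm (c (k+1)) ≠ 0 := fun h =>
      hcne (k+1) (Nat.succ_ne_zero k) ((Zsqrtd.norm_eq_zero hns _).mp h)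
    positivity
  · intro ℓ hℓ hℓn
    have hmem : ℓ - 1 ∈ Finset.range n := Finset.mem_range.mpr (by omega)
    have h1 : (Zsqrtd.norm (c ((ℓ-1)+1)))^2 ∣ ∏ k ∈ Finset.range n, (Zsqrtd.norm (c (k+1)))^2 :=
      Finset.dvd_prod_of_mem _ hmem
    have hℓ1 : (ℓ - 1) + 1 = ℓ := by omega
    rw [hℓ1] at h1
    have h2 : ((Zsqrtd.norm (c ℓ) ^ 2 : ℤ) : Zsqrtd (p:ℤ)) ∣
        ((∏ k ∈ Finset.range n, (Zsqrtd.norm (c (k+1)))^2 : ℤ) : Zsqrtd (p:ℤ)) :=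
      map_dvd (Int.castRingHom _) h1
    refine dvd_trans ?_ h2
    have h3 : ((Zsqrtd.norm (c ℓ) ^ 2 : ℤ) : Zsqrtd (p:ℤ)) = (c ℓ * star (c ℓ))^2 := by
      push_cast [Zsqrtd.norm_eq_mul_conj]
      ring
    rw [h3]
    exact ⟨c ℓ * star (c ℓ) * star (c ℓ), by ring⟩

lemma exists_shift {p : ℕ} (M : ℤ) (hM : 0 < M) (c r : Zsqrtd (p:ℤ))
    (hdvd : c ∣ ((M : ℤ) : Zsqrtd (p:ℤ))) :
    ∃ a : Zsqrtd (p:ℤ), 0 ≤ (r + c*a).re ∧ (r + c*a).re < M ∧ 0 ≤ (r + c*a).im ∧ (r + c*a).im < M := by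
  obtain ⟨e, he⟩ := hdvd
  refine ⟨e * ⟨-(r.re / M), -(r.im / M)⟩, ?_⟩
  have hca : c * (e * ⟨-(r.re / M), -(r.im / M)⟩) = ((M:ℤ) : Zsqrtd (p:ℤ)) * ⟨-(r.re / M), -(r.im / M)⟩ := by
    rw [← mul_assoc, ← he]
  rw [hca]
  have hre : (r + ((M:ℤ) : Zsqrtd (p:ℤ)) * ⟨-(r.re / M), -(r.im / M)⟩).re = r.re % M := by
    simp [Zsqrtd.re_add, Zsqrtd.re_mul, Zsqrtd.re_intCast, Zsqrtd.im_intCast, Int.emod_def]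
    ring
  have him : (r + ((M:ℤ) : Zsqrtd (p:ℤ)) * ⟨-(r.re / M), -(r.im / M)⟩).im = r.im % M := by
    simp [Zsqrtd.im_add, Zsqrtd.im_mul, Zsqrtd.re_intCast, Zsqrtd.im_intCast, Int.emod_def]
    ring
  rw [hre, him]
  exact ⟨Int.emod_nonneg _ (ne_of_gt hM), Int.emod_lt_of_pos _ hM,
    Int.emod_nonneg _ (ne_of_gt hM), Int.emod_lt_of_pos _ hM⟩

section MatrixAux
variable {n : ℕ} {A : Type*} [CommRing A]

lemma mem_UT_iff {u : (Matrix (Fin n) (Fin n) A)ˣ} :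
    u ∈ UT n A ↔ Matrix.IsUnitriangular (u : Matrix (Fin n) (Fin n) A) := Iff.rfl

lemma diag_conj_std (v w : Fin n → A) (i j : Fin n) (a : A) :
    diagonal v * single i j a * diagonal w = single i j (v i * a * w j) := by
  ext r s
  rw [mul_diagonal, diagonal_mul]
  simp only [single, of_apply]
  by_cases h : i = r ∧ j = s
  · obtain ⟨rfl, rfl⟩ := h
    simp
  · rw [if_neg h, if_neg h, mul_zero, zero_mul]

lemma isUnitriangular_one_add_std {i j : Fin n} (hij : i < j) (a : A) :
    (1 + single i j a).IsUnitriangular := by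
  constructor
  · intro r
    rw [Matrix.add_apply, Matrix.one_apply_eq]
    have : ¬(i = r ∧ j = r) := by
      rintro ⟨rfl, rfl⟩; exact lt_irrefl _ hij
    simp only [single, of_apply, if_neg this, add_zero]
  · intro r s hsr
    rw [Matrix.add_apply, Matrix.one_apply_ne (ne_of_gt hsr)]
    have : ¬(i = r ∧ j = s) := by
      rintro ⟨rfl, rfl⟩
      exact absurd (hsr.trans hij) (lt_irrefl _)
    simp only [single, of_apply, if_neg this, add_zero]

lemma isUnitriangular_diag_conj (v w : Fin n → A) (hvw : ∀ i, v i * w i = 1)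
    {W : Matrix (Fin n) (Fin n) A} (hW : W.IsUnitriangular) :
    (diagonal v * W * diagonal w).IsUnitriangular := by
  constructor
  · intro r
    rw [mul_diagonal, diagonal_mul, hW.1 r, mul_one, hvw r]
  · intro r s hsr
    rw [mul_diagonal, diagonal_mul, hW.2 hsr, mul_zero, zero_mul]

lemma step_entries {Y : Matrix (Fin n) (Fin n) A} (hY : Y.IsUnitriangular)
    {i j : Fin n} (hij : i < j) (a b : A) :
    (((1 + single i j a) * Y * (1 - single i j b)) i j = Y i j + (a - b)) ∧
    ∀ r s : Fin n, (s:ℕ) ≤ (r:ℕ) + ((j:ℕ) - (i:ℕ)) → ¬(r = i ∧ s = j) →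
      ((1 + single i j a) * Y * (1 - single i j b)) r s = Y r s := by
  have hijv : (i:ℕ) < (j:ℕ) := hij
  have hA1 : ∀ r s, ((1 + single i j a) * Y) r s
      = Y r s + (if r = i then a * Y j s else 0) := by
    intro r s
    rw [add_mul, one_mul, Matrix.add_apply]
    by_cases h : r = i
    · subst h
      rw [Matrix.single_mul_apply_same, if_pos rfl]
    · rw [Matrix.single_mul_apply_of_ne _ _ _ _ _ h, if_neg h]
  have hX : ∀ r s, ((1 + single i j a) * Y * (1 - single i j b)) r s
      = ((1 + single i j a) * Y) r s
        - (if s = j then ((1 + single i j a) * Y) r i * b else 0) := by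
    intro r s
    rw [mul_sub, mul_one, Matrix.sub_apply]
    by_cases h : s = j
    · subst h
      rw [Matrix.mul_single_apply_same, if_pos rfl]
    · rw [Matrix.mul_single_apply_of_ne _ _ _ _ _ h, if_neg h]
  constructor
  · rw [hX, hA1, hA1, if_pos rfl, if_pos rfl, if_pos rfl, hY.1 j, hY.1 i, hY.2 hij]
    ring
  · intro r s hle hne
    rw [hX, hA1]
    by_cases hr : r = i
    · subst hr
      have hsj : s ≠ j := fun h => hne ⟨rfl, h⟩
      have hslt : s < j := by
        have : (s:ℕ) ≤ (j:ℕ) := by omega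
        have : (s:ℕ) < (j:ℕ) := lt_of_le_of_ne this (fun h => hsj (Fin.ext h))
        exact this
      rw [if_pos rfl, hY.2 hslt, mul_zero, add_zero, if_neg hsj, sub_zero]
    · rw [if_neg hr]
      by_cases hs : s = j
      · subst hs
        have hir : i < r := by
          have h1 : (i:ℕ) ≤ (r:ℕ) := by omega
          have : (i:ℕ) < (r:ℕ) := lt_of_le_of_ne h1 (fun h => hr (Fin.ext h.symm))
          exact this
        rw [if_pos rfl, hA1, if_neg hr, hY.2 hir]; ring
      · rw [if_neg hs, add_zero, sub_zero]

end MatrixAux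

section GroupAux
variable {n : ℕ} {A : Type*} [CommRing A]

/-- Unit given by a diagonal matrix of units. -/
def diagUnit (e : Fin n → Aˣ) : (Matrix (Fin n) (Fin n) A)ˣ where
  val := diagonal fun i => (e i : A)
  inv := diagonal fun i => (((e i)⁻¹ : Aˣ) : A)
  val_inv := by
    rw [diagonal_mul_diagonal]
    simp [Units.mul_inv]
  inv_val := by
    rw [diagonal_mul_diagonal]
    simp [Units.inv_mul]

lemma diagUnit_conj_mem (e : Fin n → Aˣ) {X : (Matrix (Fin n) (Fin n) A)ˣ} (hX : X ∈ UT n A) :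
    diagUnit e * X * (diagUnit e)⁻¹ ∈ UT n A := by
  rw [mem_UT_iff] at hX ⊢
  have : ((diagUnit e * X * (diagUnit e)⁻¹ : (Matrix (Fin n) (Fin n) A)ˣ) : Matrix (Fin n) (Fin n) A)
      = diagonal (fun i => (e i : A)) * (X : Matrix (Fin n) (Fin n) A)
        * diagonal (fun i => (((e i)⁻¹ : Aˣ) : A)) := rfl
  rw [this]
  exact isUnitriangular_diag_conj _ _ (fun i => Units.mul_inv _) hX

/-- Conjugation by a unit preserving `UT n A` as an automorphism of `UT n A`. -/
def conjAut (U : (Matrix (Fin n) (Fin n) A)ˣ)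
    (hU : ∀ X : (Matrix (Fin n) (Fin n) A)ˣ, X ∈ UT n A → U * X * U⁻¹ ∈ UT n A)
    (hU' : ∀ X : (Matrix (Fin n) (Fin n) A)ˣ, X ∈ UT n A → U⁻¹ * X * U ∈ UT n A) :
    MulAut (UT n A) where
  toFun X := ⟨U * X * U⁻¹, hU X X.2⟩
  invFun X := ⟨U⁻¹ * X * U, hU' X X.2⟩
  left_inv X := Subtype.ext (by simp [mul_assoc])
  right_inv X := Subtype.ext (by simp [mul_assoc])
  map_mul' X Y := Subtype.ext (by
    show U * (↑X * ↑Y) * U⁻¹ = (U * ↑X * U⁻¹) * (U * ↑Y * U⁻¹)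
    group)

/-- The elementary unipotent unit `1 + a E_{ij}`. -/
def elemUnit (i j : Fin n) (hij : j ≠ i) (a : A) : (Matrix (Fin n) (Fin n) A)ˣ where
  val := 1 + single i j a
  inv := 1 - single i j a
  val_inv := by
    have h0 : single i j a * single i j a = 0 :=
      Matrix.single_mul_single_of_ne _ _ _ _ hij _
    calc (1 + single i j a) * (1 - single i j a)
        = 1 - single i j a + (single i j a
            - single i j a * single i j a) := by
          rw [add_mul, one_mul, mul_sub, mul_one]
      _ = 1 := by rw [h0]; abel
  inv_val := by
    have h0 : single i j a * single i j a = 0 :=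
      Matrix.single_mul_single_of_ne _ _ _ _ hij _
    calc (1 - single i j a) * (1 + single i j a)
        = 1 + single i j a - (single i j a
            + single i j a * single i j a) := by
          rw [sub_mul, one_mul, mul_add, mul_one]
      _ = 1 := by rw [h0]; abel

lemma elemUnit_mem {i j : Fin n} (hij : i < j) (a : A) :
    elemUnit i j (ne_of_gt hij) a ∈ UT n A :=
  mem_UT_iff.mpr (isUnitriangular_one_add_std hij a)

end GroupAux

lemma reduction {A : Type*} [CommRing A] (n : ℕ) (ε : Aˣ) (T : Set A)
    (h0 : (0:A) ∈ T) (h1 : (1:A) ∈ T)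
    (hshift : ∀ ℓ : ℕ, ℓ ≠ 0 → ℓ ≤ n → ∀ r : A, ∃ a : A, r + (1 - (ε:A)^ℓ) * a ∈ T) :
    ∃ φ : MulAut (UT n A), ∀ x : UT n A, ∃ y : UT n A,
      Quot.mk (TwistedConj (φ : (UT n A) ≃* (UT n A))) x = Quot.mk _ y ∧
        ∀ r s, UTmat y r s ∈ T := by
  classical
  set d : Fin n → Aˣ := fun i => ε ^ ((n:ℤ) - (i:ℕ)) with hd
  set U : (Matrix (Fin n) (Fin n) A)ˣ := diagUnit d with hUdef
  have hUc : ∀ X : (Matrix (Fin n) (Fin n) A)ˣ, X ∈ UT n A → U * X * U⁻¹ ∈ UT n A :=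
    fun X hX => diagUnit_conj_mem d hX
  have hUinv : U⁻¹ = diagUnit (fun i => (d i)⁻¹) := Units.ext rfl
  have hUc' : ∀ X : (Matrix (Fin n) (Fin n) A)ˣ, X ∈ UT n A → U⁻¹ * X * U ∈ UT n A := by
    intro X hX
    have h2 : U = (diagUnit (fun i => (d i)⁻¹))⁻¹ := by
      rw [← hUinv, inv_inv]
    rw [hUinv]
    rw [h2]
    exact diagUnit_conj_mem _ hX
  set φ : MulAut (UT n A) := conjAut U hUc hUc' with hφ
  refine ⟨φ, ?_⟩
  -- the key one-position twisting step
  have key : ∀ (y : UT n A) (i j : Fin n) (hij : i < j) (ℓ : ℕ)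
      (hlev : (j:ℕ) = (i:ℕ) + ℓ) (a : A),
      ∃ y' : UT n A, Quot.mk (TwistedConj (φ : (UT n A) ≃* (UT n A))) y' = Quot.mk _ y ∧
        UTmat y' i j = UTmat y i j + (1 - (ε:A)^ℓ) * a ∧
        ∀ r s : Fin n, (s:ℕ) ≤ (r:ℕ) + ℓ → ¬(r = i ∧ s = j) → UTmat y' r s = UTmat y r s := by
    intro y i j hij ℓ hlev a
    set z : UT n A := ⟨elemUnit i j (ne_of_gt hij) a, elemUnit_mem hij a⟩ with hz
    set b : A := (ε:A)^ℓ * a with hb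
    have hdij : d i * (d j)⁻¹ = ε ^ ℓ := by
      rw [hd]
      simp only
      rw [← _root_.zpow_sub]
      have hexp : ((n:ℤ) - (i:ℕ)) - ((n:ℤ) - (j:ℕ)) = (ℓ:ℤ) := by
        have : (j:ℕ) = (i:ℕ) + ℓ := hlev
        omega
      rw [hexp, zpow_natCast]
    have hsc : (d i : A) * a * (((d j)⁻¹ : Aˣ) : A) = b := by
      have h5 : ((d i * (d j)⁻¹ : Aˣ) : A) = ((ε ^ ℓ : Aˣ) : A) := congrArg Units.val hdij
      rw [Units.val_mul] at h5
      rw [hb, ← Units.val_pow_eq_pow_val, ← h5]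
      ring
    have hmat : UTmat (z * y * (φ z)⁻¹)
        = (1 + single i j a) * UTmat y * (1 - single i j b) := by
      have h1 : ((φ z : UT n A) : (Matrix (Fin n) (Fin n) A)ˣ) = U * (z : (Matrix (Fin n) (Fin n) A)ˣ) * U⁻¹ := rfl
      have h2 : (((φ z)⁻¹ : UT n A) : (Matrix (Fin n) (Fin n) A)ˣ)
          = U * ((z : (Matrix (Fin n) (Fin n) A)ˣ))⁻¹ * U⁻¹ := by
        have : (((φ z)⁻¹ : UT n A) : (Matrix (Fin n) (Fin n) A)ˣ)
            = (((φ z : UT n A) : (Matrix (Fin n) (Fin n) A)ˣ))⁻¹ := rfl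
        rw [this, h1]
        group
      have h4 : ((U * ((z : (Matrix (Fin n) (Fin n) A)ˣ))⁻¹ * U⁻¹ : (Matrix (Fin n) (Fin n) A)ˣ)
            : Matrix (Fin n) (Fin n) A) = 1 - single i j b := by
        have hval : ((U * ((z : (Matrix (Fin n) (Fin n) A)ˣ))⁻¹ * U⁻¹ : (Matrix (Fin n) (Fin n) A)ˣ)
            : Matrix (Fin n) (Fin n) A)
            = diagonal (fun i => (d i : A)) * (1 - single i j a)
              * diagonal (fun i => (((d i)⁻¹ : Aˣ) : A)) := rfl
        rw [hval, mul_sub, sub_mul, mul_one, diagonal_mul_diagonal, diag_conj_std, hsc]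
        have hone : (fun i => (d i : A) * (((d i)⁻¹ : Aˣ) : A)) = fun _ => (1:A) :=
          funext fun i => Units.mul_inv (d i)
        rw [hone, diagonal_one]
      have h6 : UTmat (z * y * (φ z)⁻¹)
          = (1 + single i j a) * UTmat y
            * (((U * ((z : (Matrix (Fin n) (Fin n) A)ˣ))⁻¹ * U⁻¹ : (Matrix (Fin n) (Fin n) A)ˣ))
              : Matrix (Fin n) (Fin n) A) := by
        rw [← h2]
        rfl
      rw [h6, h4]
    have hY : (UTmat y).IsUnitriangular := y.2
    have hstep := step_entries hY hij a b
    have hsub : (j:ℕ) - (i:ℕ) = ℓ := by omega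
    rw [hsub] at hstep
    refine ⟨z * y * (φ z)⁻¹, Quot.sound ⟨z, rfl⟩, ?_, ?_⟩
    · rw [hmat, hstep.1, hb]
      ring
    · intro r s hle hne
      rw [hmat]
      exact hstep.2 r s hle hne
  -- main double induction
  intro x
  have outer : ∀ ℓ : ℕ, ∃ y : UT n A,
      Quot.mk (TwistedConj (φ : (UT n A) ≃* (UT n A))) x = Quot.mk _ y ∧
        ∀ r s : Fin n, (s:ℕ) ≤ (r:ℕ) + ℓ → UTmat y r s ∈ T := by
    intro ℓ
    induction ℓ with
    | zero =>
      refine ⟨x, rfl, ?_⟩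
      intro r s hle
      have hx : (UTmat x).IsUnitriangular := x.2
      rcases Nat.lt_or_ge ((s:ℕ)) ((r:ℕ)) with h | h
      · rw [hx.2 (Fin.lt_def.mpr h)]
        exact h0
      · have hsr : s = r := Fin.ext (by omega)
        subst hsr
        rw [hx.1 s]
        exact h1
    | succ ℓ ih =>
      obtain ⟨y0, hy0, hy0T⟩ := ih
      have inner : ∀ k : ℕ, ∃ y' : UT n A,
          Quot.mk (TwistedConj (φ : (UT n A) ≃* (UT n A))) x = Quot.mk _ y' ∧
            (∀ r s : Fin n, (s:ℕ) ≤ (r:ℕ) + ℓ → UTmat y' r s ∈ T) ∧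
            (∀ r s : Fin n, (s:ℕ) = (r:ℕ) + (ℓ+1) → (r:ℕ) < k → UTmat y' r s ∈ T) := by
        intro k
        induction k with
        | zero => exact ⟨y0, hy0, hy0T, fun r s _ h => absurd h (Nat.not_lt_zero _)⟩
        | succ k ihk =>
          obtain ⟨y', hy', hT1, hT2⟩ := ihk
          by_cases hpos : k + (ℓ+1) < n
          · set i : Fin n := ⟨k, by omega⟩ with hi
            set j : Fin n := ⟨k + (ℓ+1), hpos⟩ with hj
            have hij : i < j := by
              rw [Fin.lt_def]; simp [hi, hj]
            have hlev : (j:ℕ) = (i:ℕ) + (ℓ+1) := rfl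
            obtain ⟨a, ha⟩ := hshift (ℓ+1) (Nat.succ_ne_zero ℓ) (by omega) (UTmat y' i j)
            obtain ⟨y'', hq, hent, hpre⟩ := key y' i j hij (ℓ+1) hlev a
            refine ⟨y'', hy'.trans hq.symm, ?_, ?_⟩
            · intro r s hle
              rw [hpre r s (by omega) ?_]
              · exact hT1 r s hle
              · rintro ⟨rfl, rfl⟩
                omega
            · intro r s hseq hrk
              by_cases hrk' : (r:ℕ) = k
              · have hri : r = i := Fin.ext hrk'
                have hsj : s = j := Fin.ext (by omega)
                subst hri; subst hsj
                rw [hent]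
                exact ha
              · rw [hpre r s (by omega) ?_]
                · exact hT2 r s hseq (by omega)
                · rintro ⟨rfl, rfl⟩
                  exact hrk' rfl
          · refine ⟨y', hy', hT1, ?_⟩
            intro r s hseq hrk
            by_cases hrk' : (r:ℕ) = k
            · exfalso
              have := s.isLt
              omega
            · exact hT2 r s hseq (by omega)
      obtain ⟨y', hy', hT1, hT2⟩ := inner n
      refine ⟨y', hy', ?_⟩
      intro r s hle
      rcases Nat.lt_or_ge ((s:ℕ)) ((r:ℕ) + (ℓ+1)) with h | h
      · exact hT1 r s (by omega)
      · exact hT2 r s (by omega) r.isLt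
  obtain ⟨y, hy, hyT⟩ := outer n
  exact ⟨y, hy, fun r s => hyT r s (by have := s.isLt; omega)⟩

lemma reidemeister_ne_top {G : Type*} [Group G] (φ : G ≃* G) (S : Set G) (hS : S.Finite)
    (hcov : ∀ x : G, ∃ y ∈ S, Quot.mk (TwistedConj φ) x = Quot.mk (TwistedConj φ) y) :
    reidemeisterNumber φ ≠ ⊤ := by
  haveI := hS.to_subtype
  have hsurj : Function.Surjective (fun y : S => Quot.mk (TwistedConj φ) (y : G)) := by
    intro q
    obtain ⟨x, rfl⟩ := Quot.exists_rep q
    obtain ⟨y, hyS, h⟩ := hcov x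
    exact ⟨⟨y, hyS⟩, h.symm⟩
  haveI : Finite (Quot (TwistedConj φ)) := Finite.of_surjective _ hsurj
  rw [reidemeisterNumber, Ne, Cardinal.toENat_eq_top, not_le]
  exact Cardinal.lt_aleph0_of_finite _

/-- For a positive non-square integer `p`, the group `UT n (ℤ[√p])` does not possess the
`R∞`-property for any `n ≥ 2`: it admits an automorphism with finite Reidemeister number. -/
theorem UT_Zsqrtd_not_R_infinity
    (p : ℕ) (hp : 0 < p) (hsq : ¬ IsSquare p) (n : ℕ) (hn : 2 ≤ n) :
    ∃ φ : MulAut (UT n (Zsqrtd (p : ℤ))),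
      reidemeisterNumber (φ : (UT n (Zsqrtd (p : ℤ))) ≃* (UT n (Zsqrtd (p : ℤ)))) ≠ ⊤ := by
  classical
  obtain ⟨ε, hε⟩ := exists_unit hp hsq
  have hns := nonsquare_int hsq
  obtain ⟨M, hM, hdvd⟩ := exists_modulus hns ε hε n
  set T : Set (Zsqrtd (p:ℤ)) :=
    {x | (0 ≤ x.re ∧ x.re < M ∧ 0 ≤ x.im ∧ x.im < M) ∨ x = 0 ∨ x = 1} with hT
  have h0 : (0 : Zsqrtd (p:ℤ)) ∈ T := Or.inr (Or.inl rfl)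
  have h1 : (1 : Zsqrtd (p:ℤ)) ∈ T := Or.inr (Or.inr rfl)
  have hshift : ∀ ℓ : ℕ, ℓ ≠ 0 → ℓ ≤ n → ∀ r : Zsqrtd (p:ℤ),
      ∃ a, r + (1 - ((ε : Zsqrtd (p:ℤ)))^ℓ) * a ∈ T := by
    intro ℓ hℓ hℓn r
    obtain ⟨a, ha⟩ := exists_shift M hM _ r (hdvd ℓ hℓ hℓn)
    exact ⟨a, Or.inl ha⟩
  obtain ⟨φ, hφ⟩ := reduction n ε T h0 h1 hshift
  refine ⟨φ, ?_⟩
  have hTfin : T.Finite := by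
    have hsub : T ⊆ (fun q : ℤ × ℤ => (⟨q.1, q.2⟩ : Zsqrtd (p:ℤ))) ''
        (Set.Icc (0:ℤ) M ×ˢ Set.Icc (0:ℤ) M) := by
      intro x hx
      refine ⟨(x.re, x.im), ?_, rfl⟩
      rcases hx with ⟨ha, hb, hc, hd⟩ | rfl | rfl
      · exact ⟨⟨ha, hb.le⟩, ⟨hc, hd.le⟩⟩
      · simp only [Zsqrtd.re_zero, Zsqrtd.im_zero, Set.mem_prod, Set.mem_Icc]
        omega
      · simp only [Zsqrtd.re_one, Zsqrtd.im_one, Set.mem_prod, Set.mem_Icc]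
        omega
    exact (((Set.finite_Icc _ _).prod (Set.finite_Icc _ _)).image _).subset hsub
  set S : Set (UT n (Zsqrtd (p:ℤ))) := {y | ∀ r s, UTmat y r s ∈ T} with hS
  have hSfin : S.Finite := by
    haveI := hTfin.to_subtype
    have hinj : Function.Injective
        (fun (y : S) (r s : Fin n) => (⟨UTmat (y : UT n (Zsqrtd (p:ℤ))) r s, y.2 r s⟩ : T)) := by
      intro y1 y2 h
      apply Subtype.ext
      apply Subtype.ext
      apply Units.ext
      funext r s
      have h2 := congrFun (congrFun h r) s
      exact congrArg Subtype.val h2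
    haveI : Finite S := Finite.of_injective _ hinj
    exact S.toFinite
  exact reidemeister_ne_top (φ : (UT n (Zsqrtd (p:ℤ))) ≃* (UT n (Zsqrtd (p:ℤ)))) S hSfin
    (fun x => by obtain ⟨y, hq, hy⟩ := hφ x; exact ⟨y, hy, hq⟩)
end
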